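/- Suppose (W_n)_{n≥0} is a sequence of positive reals satisfying W_n ≤ C^{1/r_n} r_n^{(2+2N)/r_n} W_{n−1}^{(r_n + m − 1)/r_n} for all n ≥ 1, where r_n = 2^n(p_0 − m −1) + m + 1 with p_0 > m+1 > 2, C ≥ 1, N ≥ 1, and W_0 ≤ C. Then sup_n W_n ≤ C' for some constant C' depending only on C, N, m, p_0 (and not on n). -/

import Mathlib

open Real Finset

private lemma moser_sqrt_pow (x : ℝ) (hx : 0 ≤ x) (n : ℕ) :
    Real.sqrt (x ^ n) = Real.sqrt x ^ n := by
  induction n with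
  | zero => simp
  | succ n ih => rw [pow_succ, pow_succ, Real.sqrt_mul (pow_nonneg hx n), ih]

private lemma moser_one_le_prod (f : ℕ → ℝ) (hf : ∀ j, 1 ≤ f j) (n : ℕ) :
    1 ≤ ∏ j ∈ range n, f (j + 1) := by
  induction n with
  | zero => simp
  | succ n ih =>
    rw [Finset.prod_range_succ]
    nlinarith [hf (n + 1)]

private lemma moser_half_sum (n : ℕ) :
    ∑ j ∈ range n, ((1:ℝ)/2) ^ (j + 1) = 1 - (1/2) ^ n := by
  induction n with
  | zero => simp
  | succ n ih => rw [Finset.sum_range_succ, ih]; ring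

private lemma moser_iter (c0 : ℝ) (hc0 : 0 ≤ c0) (a b L : ℕ → ℝ)
    (ha : ∀ n, 0 ≤ a n) (hb : ∀ n, 1 ≤ b n) (h0 : L 0 ≤ c0)
    (hrec : ∀ n, L (n + 1) ≤ a (n + 1) + b (n + 1) * L n) :
    ∀ n, L n ≤ (c0 + ∑ k ∈ range n, a (k + 1)) * ∏ j ∈ range n, b (j + 1) := by
  intro n
  induction n with
  | zero => simpa using h0
  | succ n ih =>
    have hT : 0 ≤ c0 + ∑ k ∈ range n, a (k + 1) :=
      add_nonneg hc0 (Finset.sum_nonneg fun k _ => ha _)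
    have hP : 1 ≤ ∏ j ∈ range n, b (j + 1) := moser_one_le_prod b hb n
    have hb1 := hb (n + 1)
    have han := ha (n + 1)
    have h1 : L (n + 1) ≤ a (n + 1) + b (n + 1) *
        ((c0 + ∑ k ∈ range n, a (k + 1)) * ∏ j ∈ range n, b (j + 1)) := by
      refine (hrec n).trans ?_
      have := mul_le_mul_of_nonneg_left ih (by linarith : (0:ℝ) ≤ b (n + 1))
      linarith
    rw [Finset.sum_range_succ, Finset.prod_range_succ]
    nlinarith [mul_nonneg han (by nlinarith : (0:ℝ) ≤ (∏ j ∈ range n, b (j + 1)) * b (n + 1) - 1)]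

set_option maxHeartbeats 1000000 in
/-- Closure of the Moser iteration: the recursive inequality
W_n ≤ C^{1/r_n} r_n^{(2+2N)/r_n} W_{n-1}^{(r_n+m-1)/r_n} with W₀ ≤ C implies
a uniform bound on (W_n). -/
theorem stmt_13 (N : ℕ) (hN : 1 ≤ N) (m p₀ C : ℝ) (hm : 1 < m) (hp₀ : m + 1 < p₀)
    (hC : 1 ≤ C)
    (r : ℕ → ℝ) (hr : ∀ n : ℕ, r n = 2 ^ n * (p₀ - m - 1) + m + 1)
    (W : ℕ → ℝ) (hWpos : ∀ n : ℕ, 0 < W n) (hW0 : W 0 ≤ C)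
    (hWrec : ∀ n : ℕ, 1 ≤ n →
      W n ≤ C ^ (1 / r n) * r n ^ ((2 + 2 * (N : ℝ)) / r n)
              * W (n - 1) ^ ((r n + m - 1) / r n)) :
    ∃ C' : ℝ, 0 < C' ∧ ∀ n : ℕ, W n ≤ C' := by
  have hδ : (0:ℝ) < p₀ - m - 1 := by linarith
  set δ := p₀ - m - 1 with hδd
  have hrge : ∀ n, δ * 2 ^ n ≤ r n := by
    intro n; rw [hr n]
    have h2 : (0:ℝ) < 2 ^ n := by positivity
    nlinarith
  have hr1 : ∀ n, 1 ≤ r n := by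
    intro n; rw [hr n]
    have h2 : (0:ℝ) < 2 ^ n := by positivity
    nlinarith
  have hrpos : ∀ n, 0 < r n := fun n => lt_of_lt_of_le one_pos (hr1 n)
  have hlogC : 0 ≤ Real.log C := Real.log_nonneg hC
  -- facts about sqrt 2
  have hs2a : (4:ℝ)/3 ≤ Real.sqrt 2 := by
    nlinarith [Real.sq_sqrt (by norm_num : (0:ℝ) ≤ 2), Real.sqrt_nonneg 2]
  set q : ℝ := (Real.sqrt 2)⁻¹ with hq
  have hs2pos : (0:ℝ) < Real.sqrt 2 := by linarith
  have hqpos : 0 < q := inv_pos.mpr hs2pos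
  have hqs : q * Real.sqrt 2 = 1 := inv_mul_cancel₀ (ne_of_gt hs2pos)
  have hq34 : q ≤ 3/4 := by nlinarith
  have hq12 : (1:ℝ)/2 ≤ q := by
    nlinarith [Real.sq_sqrt (by norm_num : (0:ℝ) ≤ 2), Real.sqrt_nonneg 2]
  have hδs : 0 < Real.sqrt δ := Real.sqrt_pos.mpr hδ
  set A : ℝ := Real.log C / δ + (4 + 4 * (N:ℝ)) / Real.sqrt δ with hA
  have hApos : 0 ≤ A := by positivity
  -- the per-step quantities
  set a : ℕ → ℝ := fun n => (Real.log C + (2 + 2 * (N:ℝ)) * Real.log (r n)) / r n with ha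
  set b : ℕ → ℝ := fun n => (r n + m - 1) / r n with hb
  have hann : ∀ n, 0 ≤ a n := by
    intro n
    have : 0 ≤ Real.log (r n) := Real.log_nonneg (hr1 n)
    have hN' : (0:ℝ) ≤ (N:ℝ) := Nat.cast_nonneg N
    exact div_nonneg (by nlinarith) (hrpos n).le
  have hbge : ∀ n, 1 ≤ b n := by
    intro n
    rw [hb, one_le_div (hrpos n)]
    linarith
  -- bound on a n
  have hakey : ∀ n, a n ≤ A * q ^ n := by
    intro n
    have hs := hrpos n
    have hsg := hrge n
    have h2n : (0:ℝ) < 2 ^ n := by positivity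
    have hsq : 0 < Real.sqrt (r n) := Real.sqrt_pos.mpr hs
    have hsq2 : Real.sqrt (r n) * Real.sqrt (r n) = r n := Real.mul_self_sqrt hs.le
    have hlog : Real.log (r n) ≤ 2 * Real.sqrt (r n) := by
      have h1 := Real.log_le_sub_one_of_pos hsq
      rw [Real.log_sqrt hs.le] at h1
      nlinarith
    have hsqge : Real.sqrt δ * Real.sqrt 2 ^ n ≤ Real.sqrt (r n) := by
      rw [← moser_sqrt_pow 2 (by norm_num), ← Real.sqrt_mul hδ.le]
      exact Real.sqrt_le_sqrt hsg
    have hs2npos : (0:ℝ) < Real.sqrt 2 ^ n := by positivity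
    have hN' : (0:ℝ) ≤ (N:ℝ) := Nat.cast_nonneg N
    -- bound log C / r n
    have h1 : Real.log C / r n ≤ Real.log C / δ * q ^ n := by
      have e1 : Real.log C / r n ≤ Real.log C / (δ * 2 ^ n) :=
        div_le_div_of_nonneg_left hlogC (by positivity) hsg
      have e2 : Real.log C / (δ * 2 ^ n) = Real.log C / δ * (1/2) ^ n := by
        rw [div_pow]; field_simp; simp
      have e3 : ((1:ℝ)/2) ^ n ≤ q ^ n := pow_le_pow_left₀ (by norm_num) hq12 n
      calc Real.log C / r n ≤ Real.log C / δ * (1/2) ^ n := by rw [← e2]; exact e1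
        _ ≤ Real.log C / δ * q ^ n :=
          mul_le_mul_of_nonneg_left e3 (div_nonneg hlogC hδ.le)
    -- bound (2+2N) log (r n) / r n
    have h2 : (2 + 2 * (N:ℝ)) * Real.log (r n) / r n
        ≤ (4 + 4 * (N:ℝ)) / Real.sqrt δ * q ^ n := by
      have e1 : (2 + 2 * (N:ℝ)) * Real.log (r n) / r n
          ≤ (4 + 4 * (N:ℝ)) / Real.sqrt (r n) := by
        rw [div_le_div_iff₀ hs hsq]
        nlinarith [mul_le_mul_of_nonneg_left hlog (by linarith : (0:ℝ) ≤ 2 + 2 * (N:ℝ))]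
      have e2 : (4 + 4 * (N:ℝ)) / Real.sqrt (r n)
          ≤ (4 + 4 * (N:ℝ)) / (Real.sqrt δ * Real.sqrt 2 ^ n) :=
        div_le_div_of_nonneg_left (by linarith) (by positivity) hsqge
      have e3 : (4 + 4 * (N:ℝ)) / (Real.sqrt δ * Real.sqrt 2 ^ n)
          = (4 + 4 * (N:ℝ)) / Real.sqrt δ * q ^ n := by
        rw [hq, inv_pow]; field_simp
      linarith [e1.trans (e2.trans_eq e3)]
    have : a n = Real.log C / r n + (2 + 2 * (N:ℝ)) * Real.log (r n) / r n := by
      rw [ha]; ring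
    rw [this, hA]; ring_nf; ring_nf at h1 h2; linarith
  -- geometric sum bound
  have hqlt1 : q < 1 := by linarith
  have hgeom : ∀ n, ∑ k ∈ range n, q ^ k ≤ (1 - q)⁻¹ := by
    intro n
    rw [geom_sum_eq (by linarith : q ≠ 1)]
    rw [div_le_iff_of_neg (by linarith : q - 1 < 0)]
    have h1 : (1 - q)⁻¹ * (q - 1) = -1 := by
      rw [mul_comm, mul_inv_eq_iff_eq_mul₀ (by linarith : (1:ℝ) - q ≠ 0)]
      ring
    have : 0 ≤ q ^ n := by positivity
    linarith
  have hinv4 : (1 - q)⁻¹ ≤ 4 := by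
    have h0 : (0:ℝ) < 1 - q := by linarith
    rw [inv_le_comm₀ h0 (by norm_num : (0:ℝ) < 4)]
    linarith
  -- bound partial sums of a (k+1)
  have hsumA : ∀ n, ∑ k ∈ range n, a (k + 1) ≤ 4 * A := by
    intro n
    calc ∑ k ∈ range n, a (k + 1) ≤ ∑ k ∈ range n, A * q ^ k := by
          refine Finset.sum_le_sum fun k _ => (hakey (k+1)).trans ?_
          have : q ^ (k+1) ≤ q ^ k := pow_le_pow_of_le_one hqpos.le hqlt1.le (by omega)
          exact mul_le_mul_of_nonneg_left this hApos
      _ = A * ∑ k ∈ range n, q ^ k := by rw [Finset.mul_sum]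
      _ ≤ A * (1 - q)⁻¹ := mul_le_mul_of_nonneg_left (hgeom n) hApos
      _ ≤ 4 * A := by nlinarith [mul_le_mul_of_nonneg_left hinv4 hApos]
  -- bound products of b (j+1)
  have hprodE : ∀ n, ∏ j ∈ range n, b (j + 1) ≤ Real.exp ((m - 1) / δ) := by
    intro n
    have step1 : ∏ j ∈ range n, b (j + 1) ≤ ∏ j ∈ range n, Real.exp ((m-1) / r (j+1)) := by
      refine Finset.prod_le_prod (fun j _ => le_trans zero_le_one (hbge _)) fun j _ => ?_
      have hrne : r (j+1) ≠ 0 := (hrpos (j+1)).ne'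
      have hbeq : b (j+1) = (m-1) / r (j+1) + 1 := by
        rw [hb]; field_simp; ring
      rw [hbeq]
      exact Real.add_one_le_exp _
    rw [← Real.exp_sum] at step1
    refine step1.trans (Real.exp_le_exp.mpr ?_)
    have hhalf : ∀ j : ℕ, (m - 1) / r (j + 1) ≤ (m - 1) / δ * (1/2) ^ (j + 1) := by
      intro j
      have e1 : (m-1) / r (j+1) ≤ (m-1) / (δ * 2 ^ (j+1)) :=
        div_le_div_of_nonneg_left (by linarith) (by positivity) (hrge (j+1))
      have e2 : (m-1) / (δ * 2 ^ (j+1)) = (m-1)/δ * (1/2) ^ (j+1) := by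
        rw [one_div, inv_pow, ← div_eq_mul_inv, div_div]
      linarith [e1.trans_eq e2]
    calc ∑ j ∈ range n, (m - 1) / r (j + 1)
        ≤ ∑ j ∈ range n, (m - 1) / δ * (1/2) ^ (j + 1) :=
          Finset.sum_le_sum fun j _ => hhalf j
      _ = (m - 1) / δ * ∑ j ∈ range n, ((1:ℝ)/2) ^ (j + 1) := by rw [Finset.mul_sum]
      _ ≤ (m - 1) / δ * 1 := by
          rw [moser_half_sum]
          have h1 : (0:ℝ) ≤ (m - 1) / δ := div_nonneg (by linarith) hδ.le
          have h2 : (0:ℝ) ≤ (1/2:ℝ) ^ n := by positivity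
          nlinarith
      _ = (m - 1) / δ := mul_one _
  -- log-form recursion
  have hlogrec : ∀ n : ℕ, Real.log (W (n+1)) ≤ a (n+1) + b (n+1) * Real.log (W n) := by
    intro n
    have hrw := hWrec (n+1) (by omega)
    simp only [Nat.add_sub_cancel] at hrw
    have hCpos : (0:ℝ) < C := by linarith
    have h1 : Real.log (W (n+1)) ≤ Real.log (C ^ (1 / r (n+1)) * r (n+1) ^ ((2 + 2 * (N:ℝ)) / r (n+1)) * W n ^ ((r (n+1) + m - 1) / r (n+1))) :=
      Real.log_le_log (hWpos (n+1)) hrw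
    have hne1 : C ^ (1 / r (n+1)) ≠ 0 := (Real.rpow_pos_of_pos hCpos _).ne'
    have hne2 : r (n+1) ^ ((2 + 2 * (N:ℝ)) / r (n+1)) ≠ 0 :=
      (Real.rpow_pos_of_pos (hrpos (n+1)) _).ne'
    have hne3 : W n ^ ((r (n+1) + m - 1) / r (n+1)) ≠ 0 :=
      (Real.rpow_pos_of_pos (hWpos n) _).ne'
    rw [Real.log_mul (mul_ne_zero hne1 hne2) hne3, Real.log_mul hne1 hne2,
        Real.log_rpow hCpos, Real.log_rpow (hrpos (n+1)), Real.log_rpow (hWpos n)] at h1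
    have : 1 / r (n+1) * Real.log C + (2 + 2 * (N:ℝ)) / r (n+1) * Real.log (r (n+1))
        = a (n+1) := by rw [ha]; field_simp
    rw [hb]
    linarith [h1, this.symm.le]
  -- apply the abstract iteration lemma
  have hmain := moser_iter (Real.log C) hlogC a b (fun n => Real.log (W n)) hann hbge
    (Real.log_le_log (hWpos 0) hW0) hlogrec
  refine ⟨Real.exp ((Real.log C + 4 * A) * Real.exp ((m-1)/δ)), Real.exp_pos _, fun n => ?_⟩
  have hTn : 0 ≤ Real.log C + ∑ k ∈ range n, a (k + 1) :=
    add_nonneg hlogC (Finset.sum_nonneg fun k _ => hann _)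
  have hbound : (Real.log C + ∑ k ∈ range n, a (k + 1)) * ∏ j ∈ range n, b (j + 1)
      ≤ (Real.log C + 4 * A) * Real.exp ((m-1)/δ) := by
    have h1 : Real.log C + ∑ k ∈ range n, a (k + 1) ≤ Real.log C + 4 * A := by
      linarith [hsumA n]
    have h2 := hprodE n
    have hP1 : (1:ℝ) ≤ ∏ j ∈ range n, b (j + 1) := moser_one_le_prod b hbge n
    exact mul_le_mul h1 h2 (by linarith) (le_trans hTn h1)
  have := (hmain n).trans hbound
  calc W n = Real.exp (Real.log (W n)) := (Real.exp_log (hWpos n)).symm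
    _ ≤ _ := Real.exp_le_exp.mpr this
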